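/- Let γ < 0, and for λ ≠ 0 let Ẽ_z^λ solve dẼ_z/dt = 2(Ω²/γ)(1 − e^{(γ/2)(t/λ²)}) Ẽ_z(t) + 2(γ_0Ω²/γ²)(1 − e^{(γ/2)(t/λ²)})² with Ẽ_z^λ(0) = E_0; let ε_z solve the limit equation dε_z/dt = 2(Ω²/γ) ε_z(t) + 2(γ_0Ω²/γ²) with ε_z(0) = E_0. Then for every fixed t > 0, Ẽ_z^λ(t) → ε_z(t) as λ → 0. -/

import Mathlib

noncomputable section

open Real Filter

private lemma exp_integral_aux (c s : ℝ) (hc : c ≠ 0) :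
    ∫ u in (0:ℝ)..s, Real.exp (c*u) = (Real.exp (c*s) - 1)/c := by
  have : ∀ u ∈ Set.uIcc (0:ℝ) s, HasDerivAt (fun v => Real.exp (c*v)/c) (Real.exp (c*u)) u := by
    intro u _
    have := ((Real.hasDerivAt_exp (c*u)).comp u ((hasDerivAt_id u).const_mul c))
    simpa [mul_comm, mul_div_assoc, mul_div_cancel_left₀ _ hc] using this.div_const c
  rw [intervalIntegral.integral_eq_sub_of_hasDerivAt this
    ((Real.continuous_exp.comp (continuous_const.mul continuous_id)).intervalIntegrable 0 s)]
  simp [Real.exp_zero]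
  ring

/-- dissipative Wick rotation limit.  For `γ < 0`, let `Ez lam` (for each
`lam ≠ 0`) solve `dẼ_z/dt = 2(Ω²/γ)(1 − e^{(γ/2)(t/λ²)}) Ẽ_z + 2(γ₀Ω²/γ²)(1 − e^{(γ/2)(t/λ²)})²`
with `Ẽ_z(0) = E₀`, and let `ε_z` solve the limit equation
`dε_z/dt = 2(Ω²/γ) ε_z + 2(γ₀Ω²/γ²)` with `ε_z(0) = E₀`.  Then for every fixed `t > 0`,
`Ẽ_z^λ(t) → ε_z(t)` as `λ → 0`. -/
theorem stmt_16 (γ W γ0 E0 : ℝ) (hγ : γ < 0)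
    (Ez : ℝ → ℝ → ℝ)
    (hEz0 : ∀ lam : ℝ, lam ≠ 0 → Ez lam 0 = E0)
    (hEz : ∀ lam : ℝ, lam ≠ 0 → ∀ t, HasDerivAt (Ez lam)
      (2 * (W ^ 2 / γ) * (1 - Real.exp ((γ / 2) * (t / lam ^ 2))) * Ez lam t
        + 2 * (γ0 * W ^ 2 / γ ^ 2) * (1 - Real.exp ((γ / 2) * (t / lam ^ 2))) ^ 2) t)
    (εz : ℝ → ℝ)
    (hεz0 : εz 0 = E0)
    (hεz : ∀ t, HasDerivAt εz (2 * (W ^ 2 / γ) * εz t + 2 * (γ0 * W ^ 2 / γ ^ 2)) t) :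
    ∀ t : ℝ, 0 < t →
      Filter.Tendsto (fun lam => Ez lam t) (nhdsWithin 0 {0}ᶜ) (nhds (εz t)) := by
  intro t ht
  set a : ℝ := 2 * (W ^ 2 / γ) with ha
  set b : ℝ := 2 * (γ0 * W ^ 2 / γ ^ 2) with hb
  set K : ℝ := |a| with hK
  have hεz_cont : Continuous εz := by
    apply continuous_iff_continuousAt.2
    intro s; exact (hεz s).continuousAt
  -- bound on εz on [0,t]
  obtain ⟨M, hM⟩ := (isCompact_Icc (a := (0:ℝ)) (b := t)).exists_bound_of_continuousOn
    hεz_cont.continuousOn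
  have hM0 : 0 ≤ M := le_trans (norm_nonneg _) (hM 0 (Set.left_mem_Icc.2 ht.le))
  set C : ℝ := K * M + 2 * |b| with hC
  have hC0 : 0 ≤ C := by positivity
  set B : ℝ → ℝ := fun lam => C * (2 / (-γ)) * lam ^ 2 with hB
  have hBnn : ∀ lam : ℝ, 0 ≤ B lam := by
    intro lam
    have : (0:ℝ) < -γ := by linarith
    positivity
  -- key estimate
  have key : ∀ lam : ℝ, lam ≠ 0 →
      |Ez lam t - εz t| ≤ gronwallBound 0 K (K * B lam) t + B lam := by
    intro lam hl
    have hl2 : (0:ℝ) < lam ^ 2 := by positivity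
    set c : ℝ := γ / 2 / lam ^ 2 with hc
    have hcneg : c < 0 := div_neg_of_neg_of_pos (by linarith) hl2
    have harg : ∀ s : ℝ, (γ / 2) * (s / lam ^ 2) = c * s := by intro s; rw [hc]; ring
    set f : ℝ → ℝ := fun s => 1 - Real.exp (c * s) with hf
    have hfEz : ∀ s, HasDerivAt (Ez lam) (a * f s * Ez lam s + b * (f s) ^ 2) s := by
      intro s
      have := hEz lam hl s
      rw [harg s] at this
      exact this
    have hf01 : ∀ s : ℝ, 0 ≤ s → 0 ≤ f s ∧ f s ≤ 1 := by
      intro s hs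
      have h1 : Real.exp (c * s) ≤ 1 := Real.exp_le_one_iff.2 (mul_nonpos_of_nonpos_of_nonneg hcneg.le hs)
      have h2 : 0 < Real.exp (c * s) := Real.exp_pos _
      refine ⟨?_, ?_⟩
      · show 0 ≤ 1 - Real.exp (c * s); linarith
      · show 1 - Real.exp (c * s) ≤ 1; linarith
    set r : ℝ → ℝ := fun s => a * (f s - 1) * εz s + b * ((f s) ^ 2 - 1) with hr
    have hf_cont : Continuous f :=
      continuous_const.sub (Real.continuous_exp.comp (continuous_const.mul continuous_id))
    have hr_cont : Continuous r := by
      apply Continuous.add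
      · exact (continuous_const.mul (hf_cont.sub continuous_const)).mul hεz_cont
      · exact continuous_const.mul ((hf_cont.pow 2).sub continuous_const)
    set R : ℝ → ℝ := fun s => ∫ u in (0:ℝ)..s, r u with hR
    have hR_deriv : ∀ s, HasDerivAt R (r s) s := fun s =>
      (hr_cont.integral_hasStrictDerivAt 0 s).hasDerivAt
    -- pointwise bound on r
    have hr_bound : ∀ s ∈ Set.Icc (0:ℝ) t, |r s| ≤ C * Real.exp (c * s) := by
      intro s hs
      have hexp : 0 < Real.exp (c * s) := Real.exp_pos _
      have h1 : |f s - 1| = Real.exp (c * s) := by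
        simp [hf, abs_of_nonpos, hexp.le]
      have hfs := hf01 s hs.1
      have h2 : |(f s) ^ 2 - 1| ≤ 2 * Real.exp (c * s) := by
        have : (f s) ^ 2 - 1 = (f s - 1) * (f s + 1) := by ring
        rw [this, abs_mul, h1]
        have : |f s + 1| ≤ 2 := by rw [abs_of_nonneg (by linarith [hfs.1])]; linarith [hfs.2]
        nlinarith
      have hM' : |εz s| ≤ M := by
        have := hM s hs
        simpa using this
      have e1 : |a * (f s - 1) * εz s| ≤ |a| * Real.exp (c * s) * M := by
        rw [abs_mul, abs_mul, h1]
        gcongr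
      have e2 : |b * ((f s) ^ 2 - 1)| ≤ |b| * (2 * Real.exp (c * s)) := by
        rw [abs_mul]
        gcongr
      calc |r s| ≤ |a * (f s - 1) * εz s| + |b * ((f s) ^ 2 - 1)| := abs_add_le _ _
        _ ≤ |a| * Real.exp (c * s) * M + |b| * (2 * Real.exp (c * s)) := add_le_add e1 e2
        _ = C * Real.exp (c * s) := by rw [hC, hK]; ring
    -- bound on R
    have hR_bound : ∀ s ∈ Set.Icc (0:ℝ) t, |R s| ≤ B lam := by
      intro s hs
      have hint_r : IntervalIntegrable r MeasureTheory.volume 0 s := hr_cont.intervalIntegrable _ _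
      have hint_b : IntervalIntegrable (fun u => C * Real.exp (c * u)) MeasureTheory.volume 0 s :=
        (continuous_const.mul (Real.continuous_exp.comp
          (continuous_const.mul continuous_id))).intervalIntegrable _ _
      have h1 : |R s| ≤ ∫ u in (0:ℝ)..s, |r u| := by
        simpa [hR] using intervalIntegral.abs_integral_le_integral_abs (a := 0) (b := s)
          (f := r) hs.1
      have h2 : (∫ u in (0:ℝ)..s, |r u|) ≤ ∫ u in (0:ℝ)..s, C * Real.exp (c * u) := by
        apply intervalIntegral.integral_mono_on hs.1 hint_r.abs hint_b
        intro u hu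
        exact hr_bound u ⟨hu.1, le_trans hu.2 hs.2⟩
      have h3 : (∫ u in (0:ℝ)..s, C * Real.exp (c * u)) = C * ((Real.exp (c * s) - 1) / c) := by
        rw [intervalIntegral.integral_const_mul, exp_integral_aux c s hcneg.ne]
      have h4 : (Real.exp (c * s) - 1) / c ≤ 1 / (-c) := by
        rw [div_le_iff_of_neg hcneg]
        have : 0 < Real.exp (c * s) := Real.exp_pos _
        have h5 : (1 / (-c)) * c = -1 := by
          rw [div_mul_eq_mul_div, one_mul, div_neg, div_self hcneg.ne]
        rw [h5]; linarith
      have h6 : 1 / (-c) = (2 / (-γ)) * lam ^ 2 := by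
        rw [hc]; field_simp
      calc |R s| ≤ C * ((Real.exp (c * s) - 1) / c) := by rw [← h3]; exact h1.trans h2
        _ ≤ C * (1 / (-c)) := by gcongr
        _ = B lam := by rw [h6]; simp only [hB]; ring
    -- the difference function
    set h : ℝ → ℝ := fun s => Ez lam s - εz s - R s with hh
    have hh0 : h 0 = 0 := by
      simp [hh, hR, hEz0 lam hl, hεz0]
    have hh_deriv : ∀ s, HasDerivAt h (a * f s * (Ez lam s - εz s)) s := by
      intro s
      have := ((hfEz s).sub (hεz s)).sub (hR_deriv s)
      refine this.congr_deriv ?_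
      rw [ha, hb, hr]
      ring
    -- Gronwall
    have hgb := norm_le_gronwallBound_of_norm_deriv_right_le
      (f := h) (f' := fun s => a * f s * (Ez lam s - εz s))
      (δ := 0) (K := K) (ε := K * B lam) (a := 0) (b := t)
      (fun s _ => (hh_deriv s).continuousAt.continuousWithinAt)
      (fun s _ => (hh_deriv s).hasDerivWithinAt)
      (by simp [hh0])
      ?_ t (Set.right_mem_Icc.2 ht.le)
    · have hRt := hR_bound t (Set.right_mem_Icc.2 ht.le)
      have hgb' : |h t| ≤ gronwallBound 0 K (K * B lam) t := by
        simpa [Real.norm_eq_abs] using hgb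
      have hsplit : |Ez lam t - εz t| ≤ |h t| + |R t| := by
        have heq : Ez lam t - εz t = h t + R t := by simp only [hh]; ring
        rw [heq]; exact abs_add_le _ _
      exact hsplit.trans (add_le_add hgb' hRt)
    · intro s hs
      have hfs := hf01 s hs.1
      have hRs := hR_bound s ⟨hs.1, hs.2.le⟩
      have hEq : Ez lam s - εz s = h s + R s := by rw [hh]; ring
      have hfa : |f s| ≤ 1 := abs_le.2 ⟨by linarith [hfs.1], hfs.2⟩
      have t1 : |f s| * |h s + R s| ≤ |h s| + |R s| :=
        le_trans (mul_le_of_le_one_left (abs_nonneg _) hfa) (abs_add_le _ _)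
      have h1 : ‖a * f s * (Ez lam s - εz s)‖ ≤ K * (|h s| + |R s|) := by
        rw [hEq, Real.norm_eq_abs, abs_mul, abs_mul, mul_assoc, hK]
        exact mul_le_mul_of_nonneg_left t1 (abs_nonneg a)
      have h2 : K * (|h s| + |R s|) ≤ K * |h s| + K * B lam := by
        have hKnn : 0 ≤ K := abs_nonneg a
        nlinarith [abs_nonneg (R s)]
      calc ‖a * f s * (Ez lam s - εz s)‖ ≤ K * (|h s| + |R s|) := h1
        _ ≤ K * |h s| + K * B lam := h2
        _ = K * ‖h s‖ + K * B lam := by rw [Real.norm_eq_abs]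
  -- pass to the limit
  have hBlim : Tendsto B (nhdsWithin 0 {0}ᶜ) (nhds 0) := by
    have : Continuous B := by apply Continuous.mul continuous_const (continuous_pow 2)
    have h0 : B 0 = 0 := by simp [hB]
    exact (h0 ▸ this.continuousAt.tendsto).mono_left nhdsWithin_le_nhds
  have hGlim : Tendsto (fun lam => gronwallBound 0 K (K * B lam) t + B lam)
      (nhdsWithin 0 {0}ᶜ) (nhds 0) := by
    have hcont : Continuous fun ε : ℝ => gronwallBound 0 K (K * ε) t :=
      (gronwallBound_continuous_ε 0 K t).comp (continuous_const.mul continuous_id)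
    have key2 : Tendsto (fun lam => gronwallBound 0 K (K * B lam) t + B lam)
        (nhdsWithin 0 {0}ᶜ) (nhds (gronwallBound 0 K (K * 0) t + 0)) :=
      (hcont.continuousAt.tendsto.comp hBlim).add hBlim
    simpa [gronwallBound_ε0_δ0] using key2
  rw [tendsto_iff_dist_tendsto_zero]
  apply squeeze_zero' (Filter.Eventually.of_forall fun lam => dist_nonneg)
    ?_ hGlim
  filter_upwards [self_mem_nhdsWithin] with lam hl
  rw [Real.dist_eq]
  exact key lam hl
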